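/- Let l, t, r, m be positive integers (m ≥ 0) with l = tr + m. The (2l)-by-(2l) block matrix A built from 2-by-2 blocks, having r diagonal t-by-t blocks of P's, an m-by-t block of P's in the lower-left corner, and M's elsewhere (P = (1/2t)·[[1,1],[1,1]], M = (1/2t)·[[1,-1],[1,-1]]), satisfies A² = A and trace A = r. -/

import Mathlib

/-- Entry function of the matrix, as a function of natural number indices. -/
noncomputable def Ent12 (t r : ℕ) (i j : ℕ) : ℝ :=
  if (i / 2 < t * r ∧ j / 2 < t * r ∧ i / 2 / t = j / 2 / t) ∨
      (t * r ≤ i / 2 ∧ j / 2 < t)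
  then (1 / (2 * t) : ℝ)
  else if j % 2 = 0 then (1 / (2 * t) : ℝ) else -(1 / (2 * t))

lemma pair_sum12 (f : ℕ → ℝ) : ∀ n : ℕ,
    ∑ j ∈ Finset.range (2 * n), f j = ∑ b ∈ Finset.range n, (f (2 * b) + f (2 * b + 1))
  | 0 => by simp
  | n + 1 => by
    rw [show 2 * (n + 1) = (2 * n + 1) + 1 by ring, Finset.sum_range_succ,
      Finset.sum_range_succ, Finset.sum_range_succ, pair_sum12 f n]
    ring

lemma div_eq_iff12 {t b q : ℕ} (ht : 0 < t) : b / t = q ↔ t * q ≤ b ∧ b < t * q + t := by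
  rw [show (b / t = q) ↔ (q ≤ b / t ∧ b / t < q + 1) by omega,
    Nat.le_div_iff_mul_le ht, Nat.div_lt_iff_lt_mul ht, Nat.succ_mul, Nat.mul_comm q t]

theorem stmt_12 (t r m l : ℕ) (ht : 0 < t) (hr : 0 < r)
    (hl : l = t * r + m)
    (A : Matrix (Fin (2 * l)) (Fin (2 * l)) ℝ)
    (hA : A = Matrix.of fun i j : Fin (2 * l) =>
      if ((i : ℕ) / 2 < t * r ∧ (j : ℕ) / 2 < t * r ∧
            (i : ℕ) / 2 / t = (j : ℕ) / 2 / t) ∨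
          (t * r ≤ (i : ℕ) / 2 ∧ (j : ℕ) / 2 < t)
      then (1 / (2 * t) : ℝ)
      else if (j : ℕ) % 2 = 0 then (1 / (2 * t) : ℝ) else -(1 / (2 * t))) :
    A * A = A ∧ A.trace = r := by
  have htR : (t : ℝ) ≠ 0 := Nat.cast_ne_zero.mpr ht.ne'
  have htr : t ≤ t * r := Nat.le_mul_of_pos_right t hr
  set c : ℝ := 1 / (2 * t) with hc
  have hAE : ∀ i j : Fin (2 * l), A i j = Ent12 t r i j := by
    intro i j; rw [hA]; rfl
  -- basic arithmetic facts about paired indices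
  have hdiv0 : ∀ b : ℕ, (2 * b) / 2 = b := fun b => by omega
  have hdiv1 : ∀ b : ℕ, (2 * b + 1) / 2 = b := fun b => by omega
  have hmod0 : ∀ b : ℕ, (2 * b) % 2 = 0 := fun b => by omega
  have hmod1 : ∀ b : ℕ, (2 * b + 1) % 2 = 1 := fun b => by omega
  -- value of Ent at even column is always c
  have hEeven : ∀ i b : ℕ, Ent12 t r i (2 * b) = c := by
    intro i b
    unfold Ent12
    rw [hdiv0, hmod0]
    split <;> simp [hc]
  -- Ent with row index 2b or 2b+1 agree (depend only on b)
  have hErow : ∀ b k : ℕ, Ent12 t r (2 * b + 1) k = Ent12 t r (2 * b) k := by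
    intro b k
    unfold Ent12
    rw [hdiv0, hdiv1]
  -- Ent at odd column:
  have hEodd : ∀ i b : ℕ, Ent12 t r i (2 * b + 1) =
      if (i / 2 < t * r ∧ b < t * r ∧ i / 2 / t = b / t) ∨ (t * r ≤ i / 2 ∧ b < t)
      then c else -c := by
    intro i b
    unfold Ent12
    rw [hdiv1, hmod1]
    simp [hc]
  -- key: if b is in i's block, then row 2b has the same entries in column k as row i
  have hkey : ∀ i b k : ℕ,
      ((i / 2 < t * r ∧ b < t * r ∧ i / 2 / t = b / t) ∨ (t * r ≤ i / 2 ∧ b < t)) →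
      Ent12 t r (2 * b) k = Ent12 t r i k := by
    intro i b k hb
    unfold Ent12
    rw [hdiv0]
    congr 1
    rcases hb with ⟨h1, h2, h3⟩ | ⟨h1, h2⟩
    · have : ¬ (t * r ≤ b) := by omega
      have : ¬ (t * r ≤ i / 2) := by omega
      simp only [eq_iff_iff]
      constructor
      · rintro (⟨_, hk1, hk2⟩ | ⟨hb', _⟩)
        · exact Or.inl ⟨h1, hk1, by omega⟩
        · omega
      · rintro (⟨_, hk1, hk2⟩ | ⟨hi', _⟩)
        · exact Or.inl ⟨h2, hk1, by omega⟩
        · omega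
    · have hb0 : b / t = 0 := Nat.div_eq_of_lt h2
      have : ¬ (i / 2 < t * r) := by omega
      have : ¬ (t * r ≤ b) := by omega
      simp only [eq_iff_iff]
      constructor
      · rintro (⟨_, hk1, hk2⟩ | ⟨hb', _⟩)
        · right
          refine ⟨h1, ?_⟩
          rw [hb0] at hk2
          have := (Nat.div_eq_zero_iff).mp hk2.symm
          omega
        · omega
      · rintro (⟨hi', _⟩ | ⟨_, hk⟩)
        · omega
        · left
          refine ⟨by omega, by omega, ?_⟩
          rw [hb0, eq_comm, Nat.div_eq_zero_iff]
          omega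
  -- the block set of row i has exactly t elements
  have hcard : ∀ i : ℕ,
      ((Finset.range l).filter (fun b =>
        (i / 2 < t * r ∧ b < t * r ∧ i / 2 / t = b / t) ∨ (t * r ≤ i / 2 ∧ b < t))).card
        = t := by
    intro i
    by_cases hi : i / 2 < t * r
    · set q := i / 2 / t with hq
      have hqr : q < r := by
        rw [hq]
        exact Nat.div_lt_iff_lt_mul ht |>.mpr (by rwa [Nat.mul_comm])
      have hql : t * q + t ≤ l := by
        have : t * (q + 1) ≤ t * r := Nat.mul_le_mul_left t hqr
        rw [Nat.mul_add, Nat.mul_one] at this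
        omega
      have : ((Finset.range l).filter (fun b =>
          (i / 2 < t * r ∧ b < t * r ∧ i / 2 / t = b / t) ∨ (t * r ≤ i / 2 ∧ b < t)))
          = Finset.Ico (t * q) (t * q + t) := by
        ext b
        simp only [Finset.mem_filter, Finset.mem_range, Finset.mem_Ico]
        constructor
        · rintro ⟨hbl, ⟨_, hb1, hb2⟩ | ⟨hi', _⟩⟩
          · have := (div_eq_iff12 ht).mp hb2.symm
            exact this
          · omega
        · rintro ⟨h1, h2⟩
          have hbq : b / t = q := (div_eq_iff12 ht).mpr ⟨h1, h2⟩
          have hbtr : b < t * r := by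
            have : t * (q + 1) ≤ t * r := Nat.mul_le_mul_left t hqr
            rw [Nat.mul_add, Nat.mul_one] at this
            omega
          exact ⟨by omega, Or.inl ⟨hi, hbtr, hbq.symm⟩⟩
      rw [this, Nat.card_Ico]
      omega
    · have : ((Finset.range l).filter (fun b =>
          (i / 2 < t * r ∧ b < t * r ∧ i / 2 / t = b / t) ∨ (t * r ≤ i / 2 ∧ b < t)))
          = Finset.range t := by
        ext b
        simp only [Finset.mem_filter, Finset.mem_range]
        constructor
        · rintro ⟨_, ⟨h1, _⟩ | ⟨_, h2⟩⟩
          · omega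
          · exact h2
        · intro hb
          exact ⟨by omega, Or.inr ⟨by omega, hb⟩⟩
      rw [this, Finset.card_range]
  constructor
  · ext i k
    rw [Matrix.mul_apply]
    simp only [hAE]
    rw [show (∑ j : Fin (2 * l), Ent12 t r ↑i ↑j * Ent12 t r ↑j ↑k)
        = ∑ j ∈ Finset.range (2 * l), Ent12 t r ↑i j * Ent12 t r j ↑k from
      Fin.sum_univ_eq_sum_range (fun j => Ent12 t r ↑i j * Ent12 t r j ↑k) (2 * l)]
    rw [pair_sum12]
    have hterm : ∀ b : ℕ,
        Ent12 t r ↑i (2 * b) * Ent12 t r (2 * b) ↑k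
          + Ent12 t r ↑i (2 * b + 1) * Ent12 t r (2 * b + 1) ↑k
        = if ((i : ℕ) / 2 < t * r ∧ b < t * r ∧ (i : ℕ) / 2 / t = b / t) ∨
            (t * r ≤ (i : ℕ) / 2 ∧ b < t)
          then 2 * c * Ent12 t r ↑i ↑k else 0 := by
      intro b
      rw [hEeven, hErow, hEodd]
      split_ifs with hcond
      · rw [hkey ↑i b ↑k hcond]
        ring
      · ring
    rw [Finset.sum_congr rfl (fun b _ => hterm b), Finset.sum_ite, Finset.sum_const,
      Finset.sum_const, hcard]
    simp only [smul_zero, add_zero, nsmul_eq_mul]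
    rw [← mul_assoc, show (t : ℝ) * (2 * c) = 1 by rw [hc]; field_simp, one_mul]
  · simp only [Matrix.trace, Matrix.diag]
    simp only [hAE]
    rw [show (∑ i : Fin (2 * l), Ent12 t r ↑i ↑i)
        = ∑ i ∈ Finset.range (2 * l), Ent12 t r i i from
      Fin.sum_univ_eq_sum_range (fun i => Ent12 t r i i) (2 * l)]
    rw [pair_sum12]
    have hterm : ∀ b : ℕ,
        Ent12 t r (2 * b) (2 * b) + Ent12 t r (2 * b + 1) (2 * b + 1)
        = if b < t * r then 2 * c else 0 := by
      intro b
      rw [hEeven, hEodd, hdiv1]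
      by_cases hb : b < t * r
      · rw [if_pos hb, if_pos (Or.inl ⟨hb, hb, rfl⟩)]
        ring
      · rw [if_neg hb, if_neg (by omega)]
        ring
    rw [Finset.sum_congr rfl (fun b _ => hterm b), Finset.sum_ite, Finset.sum_const,
      Finset.sum_const]
    have : (Finset.range l).filter (fun b => b < t * r) = Finset.range (t * r) := by
      ext b
      simp only [Finset.mem_filter, Finset.mem_range]
      omega
    rw [this, Finset.card_range]
    simp only [smul_zero, add_zero, nsmul_eq_mul, hc]
    push_cast
    field_simp
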